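/- arXiv:2605.05558 — 2 statements merged into one kernel-verified Lean document; each statement's English description precedes it below -/
import Mathlib

section
/- Let W_H > 0, k > 0, r_c > 0, λ > 0, and suppose (x₀, y₀) minimizes the cost C(x,y) = W_H·x + k·r_c·y over the feasible set S = {(x, y) ∈ ℝ² : x ≥ 0, y ≥ 0, x + λ⁻¹·y ≥ 1}. If x₀ > 0, then W_H ≤ λ·k·r_c. -/
/-- If `(x₀, y₀)` minimizes `C(x,y) = W_H·x + k·r_c·y` over
`S = {(x,y) : x ≥ 0, y ≥ 0, x + λ⁻¹·y ≥ 1}` and `x₀ > 0`, then `W_H ≤ λ·k·r_c`. -/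
theorem caw_bound (W_H k r_c lam x₀ y₀ : ℝ)
    (hW : 0 < W_H) (hk : 0 < k) (hr : 0 < r_c) (hlam : 0 < lam)
    (hmem : 0 ≤ x₀ ∧ 0 ≤ y₀ ∧ 1 ≤ x₀ + lam⁻¹ * y₀)
    (hmin : ∀ p : ℝ × ℝ, 0 ≤ p.1 → 0 ≤ p.2 → 1 ≤ p.1 + lam⁻¹ * p.2 →
      W_H * x₀ + k * r_c * y₀ ≤ W_H * p.1 + k * r_c * p.2)
    (hx : 0 < x₀) :
    W_H ≤ lam * k * r_c := by
  obtain ⟨hx0, hy0, hfeas⟩ := hmem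
  have h := hmin (0, y₀ + lam * x₀) le_rfl
    (by positivity)
    (by
      simp only
      have : lam⁻¹ * (y₀ + lam * x₀) = lam⁻¹ * y₀ + x₀ := by
        field_simp
      linarith)
  simp only at h
  have h2 : W_H * x₀ ≤ lam * k * r_c * x₀ := by nlinarith
  exact le_of_mul_le_mul_right (by linarith [h2]) hx
end

section
/- Let W_H > 0, k > 0, r_c > 0, λ > 0 and suppose W_H > λ·k·r_c. Then every (x, y) in the feasible set S = {(x, y) ∈ ℝ² : x ≥ 0, y ≥ 0, x + λ⁻¹·y ≥ 1} with x > 0 has cost C(x,y) = W_H·x + k·r_c·y strictly greater than the minimum cost λ·k·r_c; in particular no cost-minimizing configuration employs positive human labor. -/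
/-- If `W_H > λ·k·r_c`, then every feasible `(x, y)` with `x > 0`
has cost strictly greater than the minimum cost `λ·k·r_c`: human labor is priced
out of the substitutable task set. -/
theorem caw_displacement (W_H k r_c lam : ℝ)
    (hW : 0 < W_H) (hk : 0 < k) (hr : 0 < r_c) (hlam : 0 < lam)
    (hgt : lam * k * r_c < W_H) :
    ∀ p : ℝ × ℝ, 0 ≤ p.1 → 0 ≤ p.2 → 1 ≤ p.1 + lam⁻¹ * p.2 → 0 < p.1 →
      lam * k * r_c < W_H * p.1 + k * r_c * p.2 := by
  intro p hx hy hfeas hxpos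
  have h1 : lam * (p.1 + lam⁻¹ * p.2) ≥ lam * 1 := by
    exact mul_le_mul_of_nonneg_left hfeas hlam.le
  rw [mul_add, ← mul_assoc, mul_inv_cancel₀ hlam.ne', one_mul, mul_one] at h1
  nlinarith [mul_pos hk hr, mul_pos (mul_pos hk hr) hxpos, mul_nonneg (mul_pos hk hr).le hy]
end
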